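/- Let n ≥ 1 and w ∈ S_n. If s_{i_1}⋯s_{i_r} and s_{j_1}⋯s_{j_r} are two reduced words for w (i.e., products of adjacent transpositions with r = ℓ(w), the inversion number of w), then the compositions of Demazure operators ∂_{i_1}∘⋯∘∂_{i_r} and ∂_{j_1}∘⋯∘∂_{j_r} on ℚ[x_1,…,x_n] are equal. Hence the operator ∂_w is well defined independently of the chosen reduced word. -/

import Mathlib

open MvPolynomial
open scoped Classical

/-- The Coxeter length of a permutation of `Fin n`, i.e. its number of inversions. -/
def permLen {n : ℕ} (w : Equiv.Perm (Fin n)) : ℕ :=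
  (Finset.univ.filter (fun p : Fin n × Fin n => p.1 < p.2 ∧ w p.2 < w p.1)).card

/-- The adjacent transposition `s_i` exchanging the `i`-th and `(i+1)`-th letters
(zero-indexed); junk value `1` if out of range. -/
def adjSwap (n : ℕ) (i : ℕ) : Equiv.Perm (Fin n) :=
  if h : i + 1 < n then Equiv.swap ⟨i, Nat.lt_of_succ_lt h⟩ ⟨i + 1, h⟩ else 1

/-- The longest element `w₀` of the symmetric group on `Fin n`, `i ↦ n - 1 - i`
(one-indexed: `i ↦ n + 1 - i`). -/
def w0 (n : ℕ) : Equiv.Perm (Fin n) := Fin.revPerm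

/-- The Demazure (divided difference) operator with respect to a pair of variables `i j`:
`f ↦ (f - swap(i,j)·f) / (Xᵢ - Xⱼ)`.  The difference is always divisible by `Xᵢ - Xⱼ`
(for `i ≠ j`), and the quotient is unique since the polynomial ring is a domain, so the
definition by choice below produces exactly this quotient. -/
noncomputable def demazure {σ : Type} [DecidableEq σ] (i j : σ)
    (f : MvPolynomial σ ℚ) : MvPolynomial σ ℚ :=
  if h : ∃ g, f - rename (Equiv.swap i j) f = (X i - X j) * g then h.choose else 0

/-- The Demazure operator `∂ᵢ` on `ℚ[x₀, …, x_{n-1}]` (zero-indexed). -/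
noncomputable def demAt (n : ℕ) (i : ℕ) :
    MvPolynomial (Fin n) ℚ → MvPolynomial (Fin n) ℚ :=
  if h : i + 1 < n then demazure ⟨i, Nat.lt_of_succ_lt h⟩ ⟨i + 1, h⟩ else fun _ => 0

/-- The composite Demazure operator `∂_{i₁} ∘ ⋯ ∘ ∂_{i_r}` along a word `l = [i₁, …, i_r]`. -/
noncomputable def demWord (n : ℕ) (l : List ℕ) :
    MvPolynomial (Fin n) ℚ → MvPolynomial (Fin n) ℚ :=
  l.foldr (fun i op => demAt n i ∘ op) id

/-- `l = [i₁, …, i_r]` is a reduced word for `w` if all letters are in range,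
`s_{i₁} ⋯ s_{i_r} = w`, and `r = ℓ(w)` is the number of inversions of `w`. -/
def IsReducedWord (n : ℕ) (w : Equiv.Perm (Fin n)) (l : List ℕ) : Prop :=
  (∀ i ∈ l, i + 1 < n) ∧ (l.map (adjSwap n)).prod = w ∧ l.length = permLen w

/-- The Demazure operator `∂_w`, defined along a chosen reduced word of `w`
(the result is independent of this choice). -/
noncomputable def demazureOf (n : ℕ) (w : Equiv.Perm (Fin n)) :
    MvPolynomial (Fin n) ℚ → MvPolynomial (Fin n) ℚ :=
  if h : ∃ l, IsReducedWord n w l then demWord n h.choose else fun _ => 0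

/-- The Demazure operator `∂ᵢˣ` acting on the `x`-variables (the left summand) of
`ℚ[x₁, …, xₙ, t₁, …, tₙ]`. -/
noncomputable def demAtX (n : ℕ) (i : ℕ) :
    MvPolynomial (Fin n ⊕ Fin n) ℚ → MvPolynomial (Fin n ⊕ Fin n) ℚ :=
  if h : i + 1 < n then
    demazure (Sum.inl ⟨i, Nat.lt_of_succ_lt h⟩) (Sum.inl ⟨i + 1, h⟩) else fun _ => 0

/-- Composite of `x`-variable Demazure operators along a word. -/
noncomputable def demWordX (n : ℕ) (l : List ℕ) :
    MvPolynomial (Fin n ⊕ Fin n) ℚ → MvPolynomial (Fin n ⊕ Fin n) ℚ :=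
  l.foldr (fun i op => demAtX n i ∘ op) id

/-- The Demazure operator `∂_wˣ` in the `x`-variables, along a chosen reduced word of `w`. -/
noncomputable def demazureOfX (n : ℕ) (w : Equiv.Perm (Fin n)) :
    MvPolynomial (Fin n ⊕ Fin n) ℚ → MvPolynomial (Fin n ⊕ Fin n) ℚ :=
  if h : ∃ l, IsReducedWord n w l then demWordX n h.choose else fun _ => 0

/-- The top product `∏_{i + j ≤ n} (xᵢ - tⱼ)` (one-indexed), i.e. the double Schubert
polynomial of the longest element. -/
noncomputable def schubProd (n : ℕ) : MvPolynomial (Fin n ⊕ Fin n) ℚ :=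
  ∏ p ∈ Finset.univ.filter (fun p : Fin n × Fin n => (p.1 : ℕ) + (p.2 : ℕ) + 2 ≤ n),
    (X (Sum.inl p.1) - X (Sum.inr p.2))

/-- The double Schubert polynomial `𝔖_w(x, t) = ∂ˣ_{w⁻¹w₀} (∏_{i+j≤n} (xᵢ - tⱼ))`. -/
noncomputable def schubert (n : ℕ) (w : Equiv.Perm (Fin n)) :
    MvPolynomial (Fin n ⊕ Fin n) ℚ :=
  demazureOfX n (w⁻¹ * w0 n) (schubProd n)


section AuxDemazure
noncomputable section


-- divisibility
lemma dvd_sub_aeval {σ : Type} [DecidableEq σ] (i j : σ) (f : MvPolynomial σ ℚ) :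
    (X i - X j) ∣ (f - aeval (fun k => if k = i then X j else X k) f) := by
  induction f using MvPolynomial.induction_on with
  | C a => simp
  | add p q hp hq =>
      have : (p + q) - aeval (fun k => if k = i then X j else X k) (p + q)
          = (p - aeval (fun k => if k = i then X j else X k) p)
            + (q - aeval (fun k => if k = i then X j else X k) q) := by
        rw [map_add]; ring
      rw [this]; exact dvd_add hp hq
  | mul_X p k hp =>
      have : (p * X k) - aeval (fun k => if k = i then X j else X k) (p * X k)
          = (p - aeval (fun k => if k = i then X j else X k) p) * X k
            + aeval (fun k => if k = i then X j else X k) p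
              * (X k - (if k = i then X j else X k)) := by
        rw [map_mul, aeval_X]; ring
      rw [this]
      refine dvd_add (Dvd.dvd.mul_right hp _) (Dvd.dvd.mul_left ?_ _)
      by_cases h : k = i
      · subst h; simp
      · simp [h]

lemma exists_demazure_quot {σ : Type} [DecidableEq σ] (i j : σ)
    (f : MvPolynomial σ ℚ) :
    ∃ g, f - rename (Equiv.swap i j) f = (X i - X j) * g := by
  have key : aeval (fun k => if k = i then X j else X k) (rename (Equiv.swap i j) f)
      = aeval (fun k => if k = i then (X j : MvPolynomial σ ℚ) else X k) f := by
    rw [aeval_rename]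
    have hfun : ((fun k => if k = i then (X j : MvPolynomial σ ℚ) else X k) ∘ ⇑(Equiv.swap i j))
        = (fun k => if k = i then (X j : MvPolynomial σ ℚ) else X k) := by
      funext k
      by_cases hij : i = j
      · subst hij; simp [Equiv.swap_self]
      by_cases hk : k = i
      · subst hk
        simp [Equiv.swap_apply_left, Ne.symm hij]
      by_cases hk' : k = j
      · subst hk'
        simp [Equiv.swap_apply_right, hk]
      · simp [Function.comp, Equiv.swap_apply_of_ne_of_ne hk hk', hk]
    rw [hfun]
  have h1 := dvd_sub_aeval i j f
  have h2 := dvd_sub_aeval i j (rename (Equiv.swap i j) f)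
  rw [key] at h2
  have := dvd_sub h1 h2
  have heq : (f - aeval (fun k => if k = i then X j else X k) f)
      - (rename (Equiv.swap i j) f - aeval (fun k => if k = i then X j else X k) f)
      = f - rename (Equiv.swap i j) f := by ring
  rw [heq] at this
  exact this

lemma X_sub_X_ne_zero {σ : Type} [DecidableEq σ] {i j : σ} (h : i ≠ j) :
    (X i - X j : MvPolynomial σ ℚ) ≠ 0 := by
  rw [sub_ne_zero]
  exact fun he => h (MvPolynomial.X_injective he)

lemma demazure_spec {σ : Type} [DecidableEq σ] (i j : σ) (f : MvPolynomial σ ℚ) :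
    f - rename (Equiv.swap i j) f = (X i - X j) * demazure i j f := by
  have h := exists_demazure_quot i j f
  rw [demazure, dif_pos h]
  exact h.choose_spec




abbrev Kn (n : ℕ) := FractionRing (MvPolynomial (Fin n) ℚ)

def ιK {n : ℕ} : MvPolynomial (Fin n) ℚ →+* Kn n := algebraMap _ _

lemma ιK_inj {n : ℕ} : Function.Injective (ιK (n := n)) :=
  IsFractionRing.injective _ _

def Kmap {n : ℕ} (s : Equiv.Perm (Fin n)) : Kn n →+* Kn n :=
  IsFractionRing.lift (g := (ιK (n := n)).comp (rename (⇑s)).toRingHom)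
    (ιK_inj.comp (rename_injective _ s.injective))

lemma Kmap_ι {n : ℕ} (s : Equiv.Perm (Fin n)) (f : MvPolynomial (Fin n) ℚ) :
    Kmap s (ιK f) = ιK (rename (⇑s) f) :=
  IsFractionRing.lift_algebraMap _ _

lemma Kmap_X {n : ℕ} (s : Equiv.Perm (Fin n)) (k : Fin n) :
    Kmap s (ιK (X k)) = ιK (X (s k)) := by
  rw [Kmap_ι, rename_X]

lemma Kmap_Kmap {n : ℕ} (s t : Equiv.Perm (Fin n)) (x : Kn n) :
    Kmap s (Kmap t x) = Kmap (s * t) x := by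
  have : (Kmap s).comp (Kmap t) = Kmap (s * t) := by
    apply IsLocalization.ringHom_ext (nonZeroDivisors (MvPolynomial (Fin n) ℚ))
    refine RingHom.ext fun f => ?_
    simp only [RingHom.comp_apply]
    show Kmap s (Kmap t (ιK f)) = Kmap (s * t) (ιK f)
    rw [Kmap_ι, Kmap_ι, Kmap_ι, rename_rename, Equiv.Perm.coe_mul]
  exact DFunLike.congr_fun this x

lemma Kmap_one {n : ℕ} (x : Kn n) : Kmap (1 : Equiv.Perm (Fin n)) x = x := by
  have : Kmap (1 : Equiv.Perm (Fin n)) = RingHom.id _ := by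
    apply IsLocalization.ringHom_ext (nonZeroDivisors (MvPolynomial (Fin n) ℚ))
    refine RingHom.ext fun f => ?_
    show Kmap 1 (ιK f) = ιK f
    rw [Kmap_ι]
    simp
  rw [this]; rfl

def DK {n : ℕ} (a b : Fin n) : Kn n → Kn n :=
  fun g => (ιK (X a) - ιK (X b))⁻¹ * (g - Kmap (Equiv.swap a b) g)

lemma ιX_sub_ne {n : ℕ} {a b : Fin n} (h : a ≠ b) :
    ιK (X a) - ιK (X b) ≠ (0 : Kn n) := by
  rw [← map_sub]
  intro hc
  exact (by
    rw [sub_ne_zero]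
    exact fun he => h (MvPolynomial.X_injective he) :
      (X a - X b : MvPolynomial (Fin n) ℚ) ≠ 0) (ιK_inj (by rwa [map_zero]))

lemma ιK_demazure {n : ℕ} {a b : Fin n} (h : a ≠ b) (f : MvPolynomial (Fin n) ℚ) :
    ιK (demazure a b f) = DK a b (ιK f) := by
  have hs := demazure_spec a b f
  have : ιK f - Kmap (Equiv.swap a b) (ιK f)
      = (ιK (X a) - ιK (X b)) * ιK (demazure a b f) := by
    rw [Kmap_ι, ← map_sub, hs, map_mul, map_sub]
  rw [DK, this, inv_mul_cancel_left₀ (ιX_sub_ne h)]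



set_option maxHeartbeats 1000000 in
lemma braid_calc {K : Type*} [Field K] (xa xb xc g u1 u2 u12 u21 u121 : K)
    (nab : xa - xb ≠ 0) (nbc : xb - xc ≠ 0) (nac : xa - xc ≠ 0) :
    (xa - xb)⁻¹ * ((xb - xc)⁻¹ * ((xa - xb)⁻¹ * (g - u1) - (xa - xc)⁻¹ * (u2 - u21))
      - (xa - xc)⁻¹ * ((xb - xa)⁻¹ * (u1 - g) - (xb - xc)⁻¹ * (u12 - u121)))
    = (xb - xc)⁻¹ * ((xa - xb)⁻¹ * ((xb - xc)⁻¹ * (g - u2) - (xa - xc)⁻¹ * (u1 - u12))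
      - (xa - xc)⁻¹ * ((xc - xb)⁻¹ * (u2 - g) - (xa - xb)⁻¹ * (u21 - u121))) := by
  have e1 : xb - xa = -(xa - xb) := by ring
  have e2 : xc - xb = -(xb - xc) := by ring
  have e3 : xa - xc = (xa - xb) + (xb - xc) := by ring
  rw [e1, e2, e3]
  rw [e3] at nac
  generalize (xa - xb) = p at *
  generalize (xb - xc) = q at *
  rw [inv_neg, inv_neg]
  field_simp
  ring

lemma swap_sq {α : Type*} [DecidableEq α] (a b : α) :
    Equiv.swap a b * Equiv.swap a b = 1 := Equiv.swap_mul_self a b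

lemma swap_braid1 {α : Type*} [DecidableEq α] {a b c : α}
    (hab : a ≠ b) (hbc : b ≠ c) (hac : a ≠ c) :
    Equiv.swap a b * (Equiv.swap b c * Equiv.swap a b) = Equiv.swap a c := by
  ext x
  simp only [Equiv.Perm.mul_apply, Equiv.swap_apply_def]
  split_ifs <;> simp_all

lemma swap_braid2 {α : Type*} [DecidableEq α] {a b c : α}
    (hab : a ≠ b) (hbc : b ≠ c) (hac : a ≠ c) :
    Equiv.swap b c * (Equiv.swap a b * Equiv.swap b c) = Equiv.swap a c := by
  ext x
  simp only [Equiv.Perm.mul_apply, Equiv.swap_apply_def]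
  split_ifs <;> simp_all

lemma swap_comm' {α : Type*} [DecidableEq α] {a b c d : α}
    (hac : a ≠ c) (had : a ≠ d) (hbc : b ≠ c) (hbd : b ≠ d) :
    Equiv.swap a b * Equiv.swap c d = Equiv.swap c d * Equiv.swap a b := by
  ext x
  simp only [Equiv.Perm.mul_apply, Equiv.swap_apply_def]
  split_ifs <;> simp_all

lemma DK_braid {n : ℕ} {a b c : Fin n} (hab : a ≠ b) (hbc : b ≠ c) (hac : a ≠ c)
    (g : Kn n) :
    DK a b (DK b c (DK a b g)) = DK b c (DK a b (DK b c g)) := by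
  have h1 := swap_braid1 hab hbc hac
  have h2 := swap_braid2 hab hbc hac
  have hsa := swap_sq a b
  have hsb := swap_sq b c
  have e1 : Equiv.swap b c a = a := Equiv.swap_apply_of_ne_of_ne hab hac
  have e2 : Equiv.swap a b c = c := Equiv.swap_apply_of_ne_of_ne hac.symm hbc.symm
  simp only [DK, map_mul, map_inv₀, map_sub, Kmap_Kmap, Kmap_X,
    Equiv.swap_apply_left, Equiv.swap_apply_right,
    e1, e2, h1, h2, hsa, hsb, Kmap_one,
    Equiv.Perm.mul_apply]
  exact braid_calc _ _ _ _ _ _ _ _ _ (ιX_sub_ne hab) (ιX_sub_ne hbc) (ιX_sub_ne hac)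

lemma DK_comm {n : ℕ} {a b c d : Fin n}
    (hac : a ≠ c) (had : a ≠ d) (hbc : b ≠ c) (hbd : b ≠ d)
    (g : Kn n) :
    DK a b (DK c d g) = DK c d (DK a b g) := by
  have hcm := swap_comm' hac had hbc hbd
  have e1 : Equiv.swap a b c = c := Equiv.swap_apply_of_ne_of_ne hac.symm hbc.symm
  have e2 : Equiv.swap a b d = d := Equiv.swap_apply_of_ne_of_ne had.symm hbd.symm
  have e3 : Equiv.swap c d a = a := Equiv.swap_apply_of_ne_of_ne hac had
  have e4 : Equiv.swap c d b = b := Equiv.swap_apply_of_ne_of_ne hbc hbd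
  simp only [DK, map_mul, map_inv₀, map_sub, Kmap_Kmap, Kmap_X,
    Equiv.swap_apply_left, Equiv.swap_apply_right, e1, e2, e3, e4, hcm]
  ring


lemma swap_lt_iff {n : ℕ} {a b : Fin n} (hab : (a:ℕ) + 1 = b) {x y : Fin n} (hxy : x < y) :
    (Equiv.swap a b x < Equiv.swap a b y ↔ ¬(x = a ∧ y = b)) := by
  simp only [Equiv.swap_apply_def]
  split_ifs <;>
    (simp only [Fin.lt_def, Fin.ext_iff, not_and] at * <;> omega)

theorem Equiv.apply_inv_self {α : Type*} (f : Equiv.Perm α) (x : α) : f (f⁻¹ x) = x :=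
  f.apply_symm_apply x

theorem Equiv.inv_apply_self {α : Type*} (f : Equiv.Perm α) (x : α) : f⁻¹ (f x) = x :=
  f.symm_apply_apply x

lemma permLen_descent {n : ℕ} {a b : Fin n} (hab : (a:ℕ) + 1 = b) {w : Equiv.Perm (Fin n)}
    (hd : w⁻¹ b < w⁻¹ a) : permLen (Equiv.swap a b * w) + 1 = permLen w := by
  classical
  set s := Equiv.swap a b with hs
  have haneb : a ≠ b := by simp only [ne_eq, Fin.ext_iff]; omega
  have hmem : (w⁻¹ b, w⁻¹ a) ∈
      (Finset.univ.filter (fun p : Fin n × Fin n => p.1 < p.2 ∧ w p.2 < w p.1)) := by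
    simp only [Finset.mem_filter, Finset.mem_univ, true_and]
    refine ⟨hd, ?_⟩
    rw [w.apply_inv_self, w.apply_inv_self]
    simp only [Fin.lt_def]; omega
  have hset : (Finset.univ.filter
        (fun p : Fin n × Fin n => p.1 < p.2 ∧ (s * w) p.2 < (s * w) p.1))
      = (Finset.univ.filter
        (fun p : Fin n × Fin n => p.1 < p.2 ∧ w p.2 < w p.1)).erase (w⁻¹ b, w⁻¹ a) := by
    ext ⟨p, q⟩
    rw [Finset.mem_filter]
    simp only [Finset.mem_filter_univ, Finset.mem_filter, Finset.mem_univ, true_and, Finset.mem_erase,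
      Equiv.Perm.mul_apply, Prod.mk.injEq, Ne, not_and]
    constructor
    · rintro ⟨hpq, hlt⟩
      have hne : w q ≠ w p := w.injective.ne hpq.ne'
      rcases lt_or_gt_of_ne hne with hc | hc
      · refine ⟨?_, hpq, hc⟩
        rintro rfl rfl
        have h1 : w (w⁻¹ b) = b := w.apply_inv_self b
        have h2 : w (w⁻¹ a) = a := w.apply_inv_self a
        rw [h1, h2] at hlt
        rw [Equiv.swap_apply_left, Equiv.swap_apply_right] at hlt
        rw [Fin.lt_def] at hlt
        omega
      · exfalso
        have hiff := swap_lt_iff hab hc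
        have : ¬ (s (w p) < s (w q)) := not_lt.mpr (le_of_lt hlt)
        have hand : w p = a ∧ w q = b := by
          by_contra hno
          exact this (hiff.mpr hno)
        have hp : p = w⁻¹ a := by rw [← hand.1, w.inv_apply_self]
        have hq : q = w⁻¹ b := by rw [← hand.2, w.inv_apply_self]
        rw [hp, hq] at hpq
        exact absurd hpq (not_lt.mpr (le_of_lt hd))
    · rintro ⟨hne, hpq, hlt⟩
      refine ⟨hpq, ?_⟩
      rw [hs]
      refine (swap_lt_iff hab hlt).mpr ?_
      rintro ⟨hqa, hpb⟩
      have hq : q = w⁻¹ a := by rw [← hqa, w.inv_apply_self]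
      have hp : p = w⁻¹ b := by rw [← hpb, w.inv_apply_self]
      exact hne hp hq
  rw [permLen, permLen, hset, Finset.card_erase_of_mem hmem]
  have : 0 < (Finset.univ.filter
      (fun p : Fin n × Fin n => p.1 < p.2 ∧ w p.2 < w p.1)).card :=
    Finset.card_pos.mpr ⟨_, hmem⟩
  omega

lemma permLen_ascent {n : ℕ} {a b : Fin n} (hab : (a:ℕ) + 1 = b) {w : Equiv.Perm (Fin n)}
    (ha : w⁻¹ a < w⁻¹ b) : permLen (Equiv.swap a b * w) = permLen w + 1 := by
  classical
  set s := Equiv.swap a b with hs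
  have hnot : (w⁻¹ a, w⁻¹ b) ∉
      (Finset.univ.filter (fun p : Fin n × Fin n => p.1 < p.2 ∧ w p.2 < w p.1)) := by
    simp only [Finset.mem_filter, Finset.mem_univ, true_and, not_and]
    intro _
    rw [w.apply_inv_self, w.apply_inv_self, not_lt, Fin.le_def]
    omega
  have hset : (Finset.univ.filter
        (fun p : Fin n × Fin n => p.1 < p.2 ∧ (s * w) p.2 < (s * w) p.1))
      = insert (w⁻¹ a, w⁻¹ b) (Finset.univ.filter
        (fun p : Fin n × Fin n => p.1 < p.2 ∧ w p.2 < w p.1)) := by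
    ext ⟨p, q⟩
    rw [Finset.mem_filter]
    simp only [Finset.mem_filter_univ, Finset.mem_filter, Finset.mem_univ, true_and, Finset.mem_insert,
      Equiv.Perm.mul_apply, Prod.mk.injEq]
    constructor
    · rintro ⟨hpq, hlt⟩
      have hne : w q ≠ w p := w.injective.ne hpq.ne'
      rcases lt_or_gt_of_ne hne with hc | hc
      · exact Or.inr ⟨hpq, hc⟩
      · left
        have hiff := swap_lt_iff hab hc
        have : ¬ (s (w p) < s (w q)) := not_lt.mpr (le_of_lt hlt)
        have hand : w p = a ∧ w q = b := by
          by_contra hno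
          exact this (hiff.mpr hno)
        constructor
        · rw [← hand.1, w.inv_apply_self]
        · rw [← hand.2, w.inv_apply_self]
    · rintro (⟨hp, hq⟩ | ⟨hpq, hlt⟩)
      · subst hp; subst hq
        refine ⟨ha, ?_⟩
        have h1 : w (w⁻¹ b) = b := w.apply_inv_self b
        have h2 : w (w⁻¹ a) = a := w.apply_inv_self a
        rw [h1, h2, hs, Equiv.swap_apply_left, Equiv.swap_apply_right]
        simp only [Fin.lt_def]; omega
      · refine ⟨hpq, ?_⟩
        rw [hs]
        refine (swap_lt_iff hab hlt).mpr ?_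
        rintro ⟨hqa, hpb⟩
        have hq : q = w⁻¹ a := by rw [← hqa, w.inv_apply_self]
        have hp : p = w⁻¹ b := by rw [← hpb, w.inv_apply_self]
        rw [hp, hq] at hpq
        exact absurd (hpq.trans ha) (lt_irrefl _)
  rw [permLen, permLen, hset, Finset.card_insert_of_notMem hnot]


lemma permLen_one {n : ℕ} : permLen (1 : Equiv.Perm (Fin n)) = 0 := by
  rw [permLen, Finset.card_eq_zero, Finset.filter_eq_empty_iff]
  rintro p _ ⟨h1, h2⟩
  simp only [Equiv.Perm.one_apply] at h2
  exact absurd (h1.trans h2) (lt_irrefl _)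

lemma inv_ne_inv {n : ℕ} {a b : Fin n} (hab : (a:ℕ) + 1 = b) (w : Equiv.Perm (Fin n)) :
    w⁻¹ a ≠ w⁻¹ b := by
  intro h
  have : a = b := w⁻¹.injective h
  simp only [Fin.ext_iff] at this; omega

lemma permLen_mul_le {n : ℕ} {a b : Fin n} (hab : (a:ℕ) + 1 = b) (w : Equiv.Perm (Fin n)) :
    permLen (Equiv.swap a b * w) ≤ permLen w + 1 := by
  rcases lt_or_gt_of_ne (inv_ne_inv hab w) with hc | hc
  · rw [permLen_ascent hab hc]
  · have := permLen_descent hab hc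
    omega

lemma eq_one_of_no_descent {n : ℕ} (w : Equiv.Perm (Fin n))
    (h : ∀ (i : ℕ) (hi : i + 1 < n), w⁻¹ ⟨i, Nat.lt_of_succ_lt hi⟩ < w⁻¹ ⟨i + 1, hi⟩) :
    w = 1 := by
  cases n with
  | zero => exact Subsingleton.elim _ _
  | succ m =>
    have hsm : StrictMono (⇑(w⁻¹) : Fin (m + 1) → Fin (m + 1)) := by
      rw [Fin.strictMono_iff_lt_succ]
      intro i
      have hi : (i : ℕ) + 1 < m + 1 := by omega
      have := h i hi
      convert this using 2 <;> rfl
    have hr : Set.range (⇑(w⁻¹)) = Set.range (id : Fin (m+1) → Fin (m+1)) := by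
      simp [Set.range_id, Set.range_eq_univ.mpr w⁻¹.surjective]
    have : (⇑(w⁻¹)) = id := (StrictMono.range_inj hsm strictMono_id).mp hr
    have hinv : w⁻¹ = 1 := Equiv.ext fun x => congrFun this x
    rw [← inv_inv w, hinv]; rfl

lemma exists_descent {n : ℕ} {w : Equiv.Perm (Fin n)} (hw : w ≠ 1) :
    ∃ (i : ℕ) (hi : i + 1 < n), w⁻¹ ⟨i + 1, hi⟩ < w⁻¹ ⟨i, Nat.lt_of_succ_lt hi⟩ := by
  by_contra hno
  push_neg at hno
  apply hw
  apply eq_one_of_no_descent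
  intro i hi
  have h1 := hno i hi
  have h2 := inv_ne_inv (a := ⟨i, Nat.lt_of_succ_lt hi⟩) (b := ⟨i+1, hi⟩) rfl w
  rcases lt_or_gt_of_ne h2 with hc | hc
  · exact hc
  · exact absurd hc (not_lt.mpr h1)

lemma adjSwap_eq {n : ℕ} {i : ℕ} (hi : i + 1 < n) :
    adjSwap n i = Equiv.swap ⟨i, Nat.lt_of_succ_lt hi⟩ ⟨i + 1, hi⟩ := dif_pos hi

lemma exists_reduced_word {n : ℕ} : ∀ (m : ℕ) (w : Equiv.Perm (Fin n)),
    permLen w ≤ m → ∃ l, IsReducedWord n w l := by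
  intro m
  induction m with
  | zero =>
    intro w hw
    by_cases h1 : w = 1
    · exact ⟨[], by simp, by simp [h1], by simp [h1, permLen_one]⟩
    · obtain ⟨i, hi, hd⟩ := exists_descent h1
      have := permLen_descent (a := ⟨i, Nat.lt_of_succ_lt hi⟩) (b := ⟨i+1, hi⟩) rfl hd
      omega
  | succ m ih =>
    intro w hw
    by_cases h1 : w = 1
    · exact ⟨[], by simp, by simp [h1], by simp [h1, permLen_one]⟩
    · obtain ⟨i, hi, hd⟩ := exists_descent h1
      have hlen := permLen_descent (a := ⟨i, Nat.lt_of_succ_lt hi⟩) (b := ⟨i+1, hi⟩) rfl hd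
      rw [← adjSwap_eq hi] at hlen
      obtain ⟨l, hl1, hl2, hl3⟩ := ih (adjSwap n i * w) (by omega)
      refine ⟨i :: l, ?_, ?_, ?_⟩
      · intro j hj
        rcases List.mem_cons.mp hj with rfl | hj
        · exact hi
        · exact hl1 j hj
      · rw [List.map_cons, List.prod_cons, hl2, ← mul_assoc, adjSwap_eq hi,
          Equiv.swap_mul_self, one_mul]
      · simp only [List.length_cons, hl3]
        omega


lemma mk_ne_mk {n x y : ℕ} {hx : x < n} {hy : y < n} (h : x ≠ y) :
    (⟨x, hx⟩ : Fin n) ≠ ⟨y, hy⟩ := fun hc => h (congrArg Fin.val hc)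

noncomputable def DAt (n : ℕ) (i : ℕ) : Kn n → Kn n :=
  if h : i + 1 < n then DK ⟨i, Nat.lt_of_succ_lt h⟩ ⟨i + 1, h⟩ else fun _ => 0

noncomputable def DWordK (n : ℕ) (l : List ℕ) : Kn n → Kn n :=
  l.foldr (fun i op => DAt n i ∘ op) id

lemma ιK_demAt {n : ℕ} (i : ℕ) (f : MvPolynomial (Fin n) ℚ) :
    ιK (demAt n i f) = DAt n i (ιK f) := by
  rw [demAt, DAt]
  split_ifs with h
  · exact ιK_demazure (mk_ne_mk (by omega)) f
  · simp only [map_zero]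

lemma ιK_demWord {n : ℕ} (l : List ℕ) (f : MvPolynomial (Fin n) ℚ) :
    ιK (demWord n l f) = DWordK n l (ιK f) := by
  induction l with
  | nil => rfl
  | cons i t ih =>
    show ιK (demAt n i (demWord n t f)) = DAt n i (DWordK n t (ιK f))
    rw [ιK_demAt, ih]

lemma permLen_prod_le {n : ℕ} : ∀ (l : List ℕ), (∀ i ∈ l, i + 1 < n) →
    permLen (l.map (adjSwap n)).prod ≤ l.length := by
  intro l
  induction l with
  | nil => simp [permLen_one]
  | cons i t ih =>
    intro hr
    have hi := hr i List.mem_cons_self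
    rw [List.map_cons, List.prod_cons, adjSwap_eq hi]
    have h1 := permLen_mul_le (a := ⟨i, Nat.lt_of_succ_lt hi⟩) (b := ⟨i+1, hi⟩) rfl
      ((t.map (adjSwap n)).prod)
    have h2 := ih (fun j hj => hr j (List.mem_cons_of_mem _ hj))
    simp only [List.length_cons]
    omega

lemma swap_mul_inv_apply {n : ℕ} (a b : Fin n) (w : Equiv.Perm (Fin n)) (x : Fin n) :
    (Equiv.swap a b * w)⁻¹ x = w⁻¹ (Equiv.swap a b x) := by
  rw [mul_inv_rev, Equiv.swap_inv, Equiv.Perm.mul_apply]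

lemma reduced_cons {n : ℕ} {w : Equiv.Perm (Fin n)} {i : ℕ} {t : List ℕ}
    (h : IsReducedWord n w (i :: t)) :
    ∃ hi : i + 1 < n, IsReducedWord n (adjSwap n i * w) t ∧
      w⁻¹ ⟨i + 1, hi⟩ < w⁻¹ ⟨i, Nat.lt_of_succ_lt hi⟩ := by
  obtain ⟨hr, hp, hl⟩ := h
  have hi : i + 1 < n := hr i List.mem_cons_self
  refine ⟨hi, ?_⟩
  set a : Fin n := ⟨i, Nat.lt_of_succ_lt hi⟩ with ha
  set b : Fin n := ⟨i + 1, hi⟩ with hb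
  have hs : adjSwap n i = Equiv.swap a b := adjSwap_eq hi
  set u : Equiv.Perm (Fin n) := adjSwap n i * w with hu
  have hrt : ∀ j ∈ t, j + 1 < n := fun j hj => hr j (List.mem_cons_of_mem _ hj)
  have hprod : (t.map (adjSwap n)).prod = u := by
    rw [hu, ← hp, List.map_cons, List.prod_cons, ← mul_assoc, hs, Equiv.swap_mul_self, one_mul]
  have hule : permLen u ≤ t.length := hprod ▸ permLen_prod_le t hrt
  have hw : Equiv.swap a b * u = w := by
    rw [hu, hs, ← mul_assoc, Equiv.swap_mul_self, one_mul]
  have hlen : t.length + 1 = permLen w := by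
    simpa using hl
  rcases lt_or_gt_of_ne (inv_ne_inv (a := a) (b := b) rfl u) with hc | hc
  · -- ascent for u : permLen w = permLen u + 1
    have hasc := permLen_ascent (a := a) (b := b) rfl hc
    rw [hw] at hasc
    have htlen : t.length = permLen u := by omega
    have hdes : w⁻¹ b < w⁻¹ a := by
      have h1 : w⁻¹ b = u⁻¹ a := by
        rw [← hw, swap_mul_inv_apply, Equiv.swap_apply_right]
      have h2 : w⁻¹ a = u⁻¹ b := by
        rw [← hw, swap_mul_inv_apply, Equiv.swap_apply_left]
      rw [h1, h2]; exact hc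
    exact ⟨⟨hrt, hprod, htlen⟩, hdes⟩
  · -- descent for u : contradiction
    exfalso
    have hdes := permLen_descent (a := a) (b := b) rfl hc
    rw [hw] at hdes
    omega

lemma reduced_cons_of {n : ℕ} {w : Equiv.Perm (Fin n)} {i : ℕ} (hi : i + 1 < n) {t : List ℕ}
    (h : IsReducedWord n (adjSwap n i * w) t)
    (hd : w⁻¹ ⟨i + 1, hi⟩ < w⁻¹ ⟨i, Nat.lt_of_succ_lt hi⟩) :
    IsReducedWord n w (i :: t) := by
  obtain ⟨hrt, hprod, hlen⟩ := h
  set a : Fin n := ⟨i, Nat.lt_of_succ_lt hi⟩ with ha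
  set b : Fin n := ⟨i + 1, hi⟩ with hb
  have hs : adjSwap n i = Equiv.swap a b := adjSwap_eq hi
  set u : Equiv.Perm (Fin n) := adjSwap n i * w with hu
  have hw : Equiv.swap a b * u = w := by
    rw [hu, hs, ← mul_assoc, Equiv.swap_mul_self, one_mul]
  have hasc : u⁻¹ a < u⁻¹ b := by
    have h1 : u⁻¹ a = w⁻¹ b := by
      rw [hu, hs, swap_mul_inv_apply, Equiv.swap_apply_left]
    have h2 : u⁻¹ b = w⁻¹ a := by
      rw [hu, hs, swap_mul_inv_apply, Equiv.swap_apply_right]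
    rw [h1, h2]; exact hd
  have hlw := permLen_ascent (a := a) (b := b) rfl hasc
  rw [hw] at hlw
  refine ⟨?_, ?_, ?_⟩
  · intro j hj
    rcases List.mem_cons.mp hj with rfl | hj
    · exact hi
    · exact hrt j hj
  · rw [List.map_cons, List.prod_cons, hprod, hs, hw]
  · simp only [List.length_cons, hlen, hlw]

lemma DAt_comm {n : ℕ} {i j : ℕ} (hi : i + 1 < n) (hj : j + 1 < n) (hfar : i + 1 < j)
    (g : Kn n) : DAt n i (DAt n j g) = DAt n j (DAt n i g) := by
  rw [DAt, DAt, dif_pos hi, dif_pos hj]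
  exact DK_comm (mk_ne_mk (by omega)) (mk_ne_mk (by omega))
    (mk_ne_mk (by omega)) (mk_ne_mk (by omega)) g

lemma DAt_braid {n : ℕ} {i : ℕ} (hi : i + 1 < n) (hj : i + 1 + 1 < n) (g : Kn n) :
    DAt n i (DAt n (i+1) (DAt n i g)) = DAt n (i+1) (DAt n i (DAt n (i+1) g)) := by
  rw [DAt, DAt, dif_pos hi, dif_pos hj]
  exact DK_braid (mk_ne_mk (by omega)) (mk_ne_mk (by omega))
    (mk_ne_mk (by omega)) g


lemma adj_mul_inv_apply {n : ℕ} {i : ℕ} (hi : i + 1 < n) (w : Equiv.Perm (Fin n)) (x : Fin n) :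
    (adjSwap n i * w)⁻¹ x = w⁻¹ (adjSwap n i x) := by
  rw [adjSwap_eq hi, swap_mul_inv_apply, ← adjSwap_eq hi]

lemma key_far {n : ℕ} {R : ℕ}
    (ih : ∀ m, m < R → ∀ (w : Equiv.Perm (Fin n)) (l₁ l₂ : List ℕ),
      IsReducedWord n w l₁ → IsReducedWord n w l₂ → l₁.length = m →
      DWordK n l₁ = DWordK n l₂)
    {w : Equiv.Perm (Fin n)} {i j : ℕ} {t₁ t₂ : List ℕ} (hfar : i + 1 < j)
    (h₁ : IsReducedWord n w (i :: t₁)) (h₂ : IsReducedWord n w (j :: t₂))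
    (hR : (i :: t₁).length = R) :
    DWordK n (i :: t₁) = DWordK n (j :: t₂) := by
  obtain ⟨hi, ht₁, hdi⟩ := reduced_cons h₁
  obtain ⟨hj, ht₂, hdj⟩ := reduced_cons h₂
  have hl₁ : t₁.length + 1 = permLen w := by simpa using h₁.2.2
  have hl₂ : t₂.length + 1 = permLen w := by simpa using h₂.2.2
  have hlt₁ : t₁.length < R := by simp only [List.length_cons] at hR; omega
  have hlt₂ : t₂.length < R := by omega
  have eja : adjSwap n i ⟨j, Nat.lt_of_succ_lt hj⟩ = ⟨j, Nat.lt_of_succ_lt hj⟩ := by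
    rw [adjSwap_eq hi]
    exact Equiv.swap_apply_of_ne_of_ne (mk_ne_mk (by omega)) (mk_ne_mk (by omega))
  have ejb : adjSwap n i ⟨j + 1, hj⟩ = ⟨j + 1, hj⟩ := by
    rw [adjSwap_eq hi]
    exact Equiv.swap_apply_of_ne_of_ne (mk_ne_mk (by omega)) (mk_ne_mk (by omega))
  have eia : adjSwap n j ⟨i, Nat.lt_of_succ_lt hi⟩ = ⟨i, Nat.lt_of_succ_lt hi⟩ := by
    rw [adjSwap_eq hj]
    exact Equiv.swap_apply_of_ne_of_ne (mk_ne_mk (by omega)) (mk_ne_mk (by omega))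
  have eib : adjSwap n j ⟨i + 1, hi⟩ = ⟨i + 1, hi⟩ := by
    rw [adjSwap_eq hj]
    exact Equiv.swap_apply_of_ne_of_ne (mk_ne_mk (by omega)) (mk_ne_mk (by omega))
  have d₁ : (adjSwap n i * w)⁻¹ ⟨j + 1, hj⟩ <
      (adjSwap n i * w)⁻¹ ⟨j, Nat.lt_of_succ_lt hj⟩ := by
    rw [adj_mul_inv_apply hi, adj_mul_inv_apply hi, eja, ejb]
    exact hdj
  have d₂ : (adjSwap n j * w)⁻¹ ⟨i + 1, hi⟩ <
      (adjSwap n j * w)⁻¹ ⟨i, Nat.lt_of_succ_lt hi⟩ := by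
    rw [adj_mul_inv_apply hj, adj_mul_inv_apply hj, eia, eib]
    exact hdi
  obtain ⟨t₃, ht₃⟩ := exists_reduced_word
    (permLen (adjSwap n j * (adjSwap n i * w))) (adjSwap n j * (adjSwap n i * w)) le_rfl
  have h₃ : IsReducedWord n (adjSwap n i * w) (j :: t₃) := reduced_cons_of hj ht₃ d₁
  have e₁ : DWordK n t₁ = DWordK n (j :: t₃) :=
    ih t₁.length hlt₁ _ _ _ ht₁ h₃ rfl
  have hcomm : adjSwap n j * (adjSwap n i * w) = adjSwap n i * (adjSwap n j * w) := by
    rw [← mul_assoc, ← mul_assoc, adjSwap_eq hi, adjSwap_eq hj,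
      swap_comm' (mk_ne_mk (by omega)) (mk_ne_mk (by omega))
        (mk_ne_mk (by omega)) (mk_ne_mk (by omega))]
  have h₄pre : IsReducedWord n (adjSwap n i * (adjSwap n j * w)) t₃ := hcomm ▸ ht₃
  have h₄ : IsReducedWord n (adjSwap n j * w) (i :: t₃) := reduced_cons_of hi h₄pre d₂
  have e₂ : DWordK n t₂ = DWordK n (i :: t₃) :=
    ih t₂.length hlt₂ _ _ _ ht₂ h₄ rfl
  funext g
  show DAt n i (DWordK n t₁ g) = DAt n j (DWordK n t₂ g)
  rw [e₁, e₂]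
  show DAt n i (DAt n j (DWordK n t₃ g)) = DAt n j (DAt n i (DWordK n t₃ g))
  exact DAt_comm hi hj hfar _

lemma key_adj {n : ℕ} {R : ℕ}
    (ih : ∀ m, m < R → ∀ (w : Equiv.Perm (Fin n)) (l₁ l₂ : List ℕ),
      IsReducedWord n w l₁ → IsReducedWord n w l₂ → l₁.length = m →
      DWordK n l₁ = DWordK n l₂)
    {w : Equiv.Perm (Fin n)} {i : ℕ} {t₁ t₂ : List ℕ}
    (h₁ : IsReducedWord n w (i :: t₁)) (h₂ : IsReducedWord n w ((i + 1) :: t₂))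
    (hR : (i :: t₁).length = R) :
    DWordK n (i :: t₁) = DWordK n ((i + 1) :: t₂) := by
  obtain ⟨hi, ht₁, hdi⟩ := reduced_cons h₁
  obtain ⟨hj, ht₂, hdj⟩ := reduced_cons h₂
  have hl₁ : t₁.length + 1 = permLen w := by simpa using h₁.2.2
  have hl₂ : t₂.length + 1 = permLen w := by simpa using h₂.2.2
  have hlt₁ : t₁.length < R := by simp only [List.length_cons] at hR; omega
  have hlt₂ : t₂.length < R := by omega
  -- point evaluations
  have sia : adjSwap n i ⟨i, Nat.lt_of_succ_lt hi⟩ = ⟨i + 1, hi⟩ := by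
    rw [adjSwap_eq hi]; exact Equiv.swap_apply_left _ _
  have sib : adjSwap n i ⟨i + 1, Nat.lt_of_succ_lt hj⟩ = ⟨i, Nat.lt_of_succ_lt hi⟩ := by
    rw [adjSwap_eq hi]; exact Equiv.swap_apply_right _ _
  have sib' : adjSwap n i ⟨i + 1, hi⟩ = ⟨i, Nat.lt_of_succ_lt hi⟩ := by
    rw [adjSwap_eq hi]; exact Equiv.swap_apply_right _ _
  have sic : adjSwap n i ⟨i + 1 + 1, hj⟩ = ⟨i + 1 + 1, hj⟩ := by
    rw [adjSwap_eq hi]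
    exact Equiv.swap_apply_of_ne_of_ne (mk_ne_mk (by omega)) (mk_ne_mk (by omega))
  have sja : adjSwap n (i + 1) ⟨i, Nat.lt_of_succ_lt hi⟩ = ⟨i, Nat.lt_of_succ_lt hi⟩ := by
    rw [adjSwap_eq hj]
    exact Equiv.swap_apply_of_ne_of_ne (mk_ne_mk (by omega)) (mk_ne_mk (by omega))
  have sjb : adjSwap n (i + 1) ⟨i + 1, hi⟩ = ⟨i + 1 + 1, hj⟩ := by
    rw [adjSwap_eq hj]; exact Equiv.swap_apply_left _ _
  have sjc : adjSwap n (i + 1) ⟨i + 1 + 1, hj⟩ = ⟨i + 1, Nat.lt_of_succ_lt hj⟩ := by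
    rw [adjSwap_eq hj]; exact Equiv.swap_apply_right _ _
  -- chained descents
  have hchain : w⁻¹ ⟨i + 1 + 1, hj⟩ < w⁻¹ ⟨i, Nat.lt_of_succ_lt hi⟩ := lt_trans hdj hdi
  have d₁ : (adjSwap n i * w)⁻¹ ⟨i + 1 + 1, hj⟩ <
      (adjSwap n i * w)⁻¹ ⟨i + 1, Nat.lt_of_succ_lt hj⟩ := by
    rw [adj_mul_inv_apply hi, adj_mul_inv_apply hi, sic, sib]
    exact hchain
  have d₂ : (adjSwap n (i + 1) * (adjSwap n i * w))⁻¹ ⟨i + 1, hi⟩ <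
      (adjSwap n (i + 1) * (adjSwap n i * w))⁻¹ ⟨i, Nat.lt_of_succ_lt hi⟩ := by
    rw [adj_mul_inv_apply hj, adj_mul_inv_apply hj, sja, sjb,
      adj_mul_inv_apply hi, adj_mul_inv_apply hi, sia, sic]
    exact hdj
  have d₁' : (adjSwap n (i + 1) * w)⁻¹ ⟨i + 1, hi⟩ <
      (adjSwap n (i + 1) * w)⁻¹ ⟨i, Nat.lt_of_succ_lt hi⟩ := by
    rw [adj_mul_inv_apply hj, adj_mul_inv_apply hj, sja, sjb]
    exact hchain
  have d₂' : (adjSwap n i * (adjSwap n (i + 1) * w))⁻¹ ⟨i + 1 + 1, hj⟩ <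
      (adjSwap n i * (adjSwap n (i + 1) * w))⁻¹ ⟨i + 1, Nat.lt_of_succ_lt hj⟩ := by
    rw [adj_mul_inv_apply hi, adj_mul_inv_apply hi, sic, sib,
      adj_mul_inv_apply hj, adj_mul_inv_apply hj, sjc, sja]
    exact hdi
  obtain ⟨t₄, ht₄⟩ := exists_reduced_word
    (permLen (adjSwap n i * (adjSwap n (i + 1) * (adjSwap n i * w))))
    (adjSwap n i * (adjSwap n (i + 1) * (adjSwap n i * w))) le_rfl
  have h₅ : IsReducedWord n (adjSwap n (i + 1) * (adjSwap n i * w)) (i :: t₄) :=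
    reduced_cons_of hi ht₄ d₂
  have h₆ : IsReducedWord n (adjSwap n i * w) ((i + 1) :: i :: t₄) :=
    reduced_cons_of hj h₅ d₁
  have e₁ : DWordK n t₁ = DWordK n ((i + 1) :: i :: t₄) :=
    ih t₁.length hlt₁ _ _ _ ht₁ h₆ rfl
  have hbr : adjSwap n i * (adjSwap n (i + 1) * (adjSwap n i * w))
      = adjSwap n (i + 1) * (adjSwap n i * (adjSwap n (i + 1) * w)) := by
    rw [adjSwap_eq hi, adjSwap_eq hj, ← mul_assoc, ← mul_assoc, ← mul_assoc, ← mul_assoc]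
    congr 1
    rw [mul_assoc, swap_braid1 (mk_ne_mk (by omega)) (mk_ne_mk (by omega)) (mk_ne_mk (by omega)),
      mul_assoc, swap_braid2 (mk_ne_mk (by omega)) (mk_ne_mk (by omega)) (mk_ne_mk (by omega))]
  have ht₄' : IsReducedWord n (adjSwap n (i + 1) * (adjSwap n i * (adjSwap n (i + 1) * w))) t₄ :=
    hbr ▸ ht₄
  have h₅' : IsReducedWord n (adjSwap n i * (adjSwap n (i + 1) * w)) ((i + 1) :: t₄) :=
    reduced_cons_of hj ht₄' d₂'
  have h₆' : IsReducedWord n (adjSwap n (i + 1) * w) (i :: (i + 1) :: t₄) :=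
    reduced_cons_of hi h₅' d₁'
  have e₂ : DWordK n t₂ = DWordK n (i :: (i + 1) :: t₄) :=
    ih t₂.length hlt₂ _ _ _ ht₂ h₆' rfl
  funext g
  show DAt n i (DWordK n t₁ g) = DAt n (i + 1) (DWordK n t₂ g)
  rw [e₁, e₂]
  show DAt n i (DAt n (i + 1) (DAt n i (DWordK n t₄ g)))
      = DAt n (i + 1) (DAt n i (DAt n (i + 1) (DWordK n t₄ g)))
  exact DAt_braid hi hj _

lemma DWordK_indep {n : ℕ} : ∀ (r : ℕ) (w : Equiv.Perm (Fin n)) (l₁ l₂ : List ℕ),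
    IsReducedWord n w l₁ → IsReducedWord n w l₂ → l₁.length = r →
    DWordK n l₁ = DWordK n l₂ := by
  intro r
  induction r using Nat.strong_induction_on with
  | _ r ih =>
  intro w l₁ l₂ h₁ h₂ hr
  cases l₁ with
  | nil =>
    have h0 : permLen w = 0 := by
      have := h₁.2.2
      simpa using this.symm
    have hlen2 : l₂.length = 0 := by rw [h₂.2.2, h0]
    rw [List.length_eq_zero_iff] at hlen2
    subst hlen2
    rfl
  | cons i t₁ =>
    cases l₂ with
    | nil =>
      exfalso
      have ha := h₁.2.2
      have hb := h₂.2.2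
      simp only [List.length_cons, List.length_nil] at ha hb
      omega
    | cons j t₂ =>
      rcases Nat.lt_trichotomy i j with hlt | heq | hgt
      · rcases (by omega : j = i + 1 ∨ i + 1 < j) with hadj | hfar
        · subst hadj
          exact key_adj ih h₁ h₂ hr
        · exact key_far ih hfar h₁ h₂ hr
      · subst heq
        have e : DWordK n t₁ = DWordK n t₂ := by
          obtain ⟨hi, ht₁, _⟩ := reduced_cons h₁
          obtain ⟨_, ht₂, _⟩ := reduced_cons h₂
          have hl₁ : t₁.length + 1 = permLen w := by simpa using h₁.2.2
          have hlt₁ : t₁.length < r := by simp only [List.length_cons] at hr; omega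
          exact ih t₁.length hlt₁ _ _ _ ht₁ ht₂ rfl
        funext g
        show DAt n i (DWordK n t₁ g) = DAt n i (DWordK n t₂ g)
        rw [e]
      · have hr' : (j :: t₂).length = r := by
          have ha := h₁.2.2
          have hb := h₂.2.2
          simp only [List.length_cons] at ha hb hr ⊢
          omega
        rcases (by omega : i = j + 1 ∨ j + 1 < i) with hadj | hfar
        · subst hadj
          exact (key_adj ih h₂ h₁ hr').symm
        · exact (key_far ih hfar h₂ h₁ hr').symm

end
end AuxDemazure

/-- **Independence of the reduced word.**  If `l₁` and `l₂` are two reduced words for the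
same permutation `w` (products of adjacent transpositions of length `ℓ(w)`), then the
corresponding compositions of Demazure operators coincide; hence `∂_w` is well defined. -/
theorem demazure_reduced_word_independent (n : ℕ) (hn : 1 ≤ n) (w : Equiv.Perm (Fin n))
    (l₁ l₂ : List ℕ) (h₁ : IsReducedWord n w l₁) (h₂ : IsReducedWord n w l₂) :
    demWord n l₁ = demWord n l₂ := by
  have hD : DWordK n l₁ = DWordK n l₂ :=
    DWordK_indep l₁.length w l₁ l₂ h₁ h₂ rfl
  funext f
  apply ιK_inj
  rw [ιK_demWord, ιK_demWord, hD]
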